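/- (Error-reduction criterion of Proposition 1.) Under symmetric label noise with error rate e satisfying 0 ≤ e < (K−1)/K and positive class masses, for any two measurable LLM labelers ŷ₀, ŷ₁ : Ω → Fin K evaluated against the same ground truth y and the same reference r, the measurement error strictly decreases, ε(ŷ₁) < ε(ŷ₀), if and only if the observed paired contrast exceeds the change in co-labeling covariance: A_R(ŷ₁) − A_R(ŷ₀) > J(ŷ₁) − J(ŷ₀). -/

import Mathlib

open MeasureTheory

/-- True agreement `A_T(ŷ) = μ({ŷ = y})`. -/
noncomputable def trueAgree {Ω : Type*} [MeasurableSpace Ω] {K : ℕ}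
    (μ : Measure Ω) (y yhat : Ω → Fin K) : ℝ :=
  (μ {ω | yhat ω = y ω}).toReal

/-- Reference agreement `A_R(ŷ) = μ({ŷ = r})`. -/
noncomputable def refAgree {Ω : Type*} [MeasurableSpace Ω] {K : ℕ}
    (μ : Measure Ω) (r yhat : Ω → Fin K) : ℝ :=
  (μ {ω | yhat ω = r ω}).toReal

/-- Measurement error `ε(ŷ) = 1 − A_T(ŷ)`. -/
noncomputable def measError {Ω : Type*} [MeasurableSpace Ω] {K : ℕ}
    (μ : Measure Ω) (y yhat : Ω → Fin K) : ℝ :=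
  1 - trueAgree μ y yhat

/-- Co-labeling covariance
`J(ŷ) = ∑ₖ ∑ₗ [ μ({ŷ=ℓ}∩{r=ℓ}∩{y=k}) − μ({ŷ=ℓ}∩{y=k})·μ({r=ℓ}∩{y=k}) / μ({y=k}) ]`. -/
noncomputable def coLabelCov {Ω : Type*} [MeasurableSpace Ω] {K : ℕ}
    (μ : Measure Ω) (y r yhat : Ω → Fin K) : ℝ :=
  ∑ k : Fin K, ∑ l : Fin K,
    ((μ ({ω | yhat ω = l} ∩ {ω | r ω = l} ∩ {ω | y ω = k})).toReal
      - (μ ({ω | yhat ω = l} ∩ {ω | y ω = k})).toReal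
          * (μ ({ω | r ω = l} ∩ {ω | y ω = k})).toReal
          / (μ {ω | y ω = k}).toReal)


lemma part_sum {Ω : Type*} [MeasurableSpace Ω] {K : ℕ}
    (μ : Measure Ω) [IsFiniteMeasure μ] (f : Ω → Fin K) (hf : Measurable f)
    (s : Set Ω) (hs : MeasurableSet s) :
    ∑ k : Fin K, (μ ({ω | f ω = k} ∩ s)).toReal = (μ s).toReal := by
  have hmeas : ∀ k : Fin K, MeasurableSet ({ω | f ω = k} ∩ s) := by
    intro k
    exact (hf (measurableSet_singleton k)).inter hs
  have hdisj : Pairwise (Function.onFun Disjoint fun k : Fin K => ({ω | f ω = k} ∩ s)) := by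
    intro i j hij
    refine Set.disjoint_left.2 ?_
    rintro ω ⟨hi, _⟩ ⟨hj, _⟩
    exact hij (hi.symm.trans hj)
  have hset : s = ⋃ k : Fin K, ({ω | f ω = k} ∩ s) := by
    ext ω; simp
  have h1 : μ s = ∑' k : Fin K, μ ({ω | f ω = k} ∩ s) := by
    conv_lhs => rw [hset]
    exact measure_iUnion hdisj hmeas
  rw [h1, tsum_fintype, ENNReal.toReal_sum (fun k _ => measure_ne_top μ _)]


lemma key_identity {Ω : Type*} [MeasurableSpace Ω] {K : ℕ}
    (e : ℝ) (μ : Measure Ω) [IsProbabilityMeasure μ]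
    (y r : Ω → Fin K) (hy : Measurable y) (hr : Measurable r)
    (hnoise_diag : ∀ k : Fin K,
      (μ ({ω | r ω = k} ∩ {ω | y ω = k})).toReal
        = (1 - e) * (μ {ω | y ω = k}).toReal)
    (hnoise_off : ∀ k l : Fin K, l ≠ k →
      (μ ({ω | r ω = l} ∩ {ω | y ω = k})).toReal
        = e / ((K : ℝ) - 1) * (μ {ω | y ω = k}).toReal)
    (hpos : ∀ k : Fin K, 0 < μ {ω | y ω = k})
    (yhat : Ω → Fin K) (hyhat : Measurable yhat) :
    (μ {ω | yhat ω = r ω}).toReal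
      - (∑ k : Fin K, ∑ l : Fin K,
          ((μ ({ω | yhat ω = l} ∩ {ω | r ω = l} ∩ {ω | y ω = k})).toReal
            - (μ ({ω | yhat ω = l} ∩ {ω | y ω = k})).toReal
                * (μ ({ω | r ω = l} ∩ {ω | y ω = k})).toReal
                / (μ {ω | y ω = k}).toReal))
      = (1 - e) * trueAgree μ y yhat
        + e / ((K : ℝ) - 1) * (1 - trueAgree μ y yhat) := by
  have hyk : ∀ k : Fin K, MeasurableSet {ω | y ω = k} :=
    fun k => hy (measurableSet_singleton k)
  have hp : ∀ k : Fin K, (μ {ω | y ω = k}).toReal ≠ 0 :=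
    fun k => (ENNReal.toReal_pos (hpos k).ne' (measure_ne_top μ _)).ne'
  have hptot : ∑ k : Fin K, (μ {ω | y ω = k}).toReal = 1 := by
    have := part_sum μ y hy Set.univ MeasurableSet.univ
    simpa using this
  have hmeasT : MeasurableSet {ω | yhat ω = y ω} := by
    have : {ω | yhat ω = y ω} = ⋃ k : Fin K, ({ω | yhat ω = k} ∩ {ω | y ω = k}) := by
      ext ω; simp only [Set.mem_setOf_eq, Set.mem_iUnion, Set.mem_inter_iff]; exact ⟨fun h => ⟨y ω, h, rfl⟩, fun ⟨k, h1, h2⟩ => h1.trans h2.symm⟩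
    rw [this]
    exact MeasurableSet.iUnion fun k =>
      (hyhat (measurableSet_singleton k)).inter (hyk k)
  have hT : trueAgree μ y yhat
      = ∑ k : Fin K, (μ ({ω | yhat ω = k} ∩ {ω | y ω = k})).toReal := by
    unfold trueAgree
    rw [← part_sum μ y hy _ hmeasT]
    refine Finset.sum_congr rfl fun k _ => ?_
    have hset : {ω | y ω = k} ∩ {ω | yhat ω = y ω}
        = {ω | yhat ω = k} ∩ {ω | y ω = k} := by
      ext ω
      constructor
      · rintro ⟨h1, h2⟩; exact ⟨h2.trans h1, h1⟩
      · rintro ⟨h1, h2⟩; exact ⟨h2, h1.trans h2.symm⟩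
    rw [hset]
  have hmeasR : MeasurableSet {ω | yhat ω = r ω} := by
    have : {ω | yhat ω = r ω} = ⋃ k : Fin K, ({ω | yhat ω = k} ∩ {ω | r ω = k}) := by
      ext ω; simp only [Set.mem_setOf_eq, Set.mem_iUnion, Set.mem_inter_iff]; exact ⟨fun h => ⟨r ω, h, rfl⟩, fun ⟨k, h1, h2⟩ => h1.trans h2.symm⟩
    rw [this]
    exact MeasurableSet.iUnion fun k =>
      (hyhat (measurableSet_singleton k)).inter (hr (measurableSet_singleton k))
  have hRsum : (μ {ω | yhat ω = r ω}).toReal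
      = ∑ k : Fin K, ∑ l : Fin K,
          (μ ({ω | yhat ω = l} ∩ {ω | r ω = l} ∩ {ω | y ω = k})).toReal := by
    rw [← part_sum μ y hy _ hmeasR]
    refine Finset.sum_congr rfl fun k _ => ?_
    rw [← part_sum μ yhat hyhat _ ((hyk k).inter hmeasR)]
    refine Finset.sum_congr rfl fun l _ => ?_
    have hset : {ω | yhat ω = l} ∩ ({ω | y ω = k} ∩ {ω | yhat ω = r ω})
        = {ω | yhat ω = l} ∩ {ω | r ω = l} ∩ {ω | y ω = k} := by
      ext ω
      constructor
      · rintro ⟨h1, h2, h3⟩; exact ⟨⟨h1, h3.symm.trans h1⟩, h2⟩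
      · rintro ⟨⟨h1, h2⟩, h3⟩; exact ⟨h1, h3, h1.trans h2.symm⟩
    rw [hset]
  have hcol : ∀ k : Fin K,
      ∑ l : Fin K,
        (μ ({ω | yhat ω = l} ∩ {ω | y ω = k})).toReal
          * (μ ({ω | r ω = l} ∩ {ω | y ω = k})).toReal
          / (μ {ω | y ω = k}).toReal
      = (1 - e) * (μ ({ω | yhat ω = k} ∩ {ω | y ω = k})).toReal
        + e / ((K : ℝ) - 1)
          * ((μ {ω | y ω = k}).toReal
              - (μ ({ω | yhat ω = k} ∩ {ω | y ω = k})).toReal) := by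
    intro k
    have hsl : ∑ l : Fin K, (μ ({ω | yhat ω = l} ∩ {ω | y ω = k})).toReal
        = (μ {ω | y ω = k}).toReal := part_sum μ yhat hyhat _ (hyk k)
    have hcancel : ∀ c x : ℝ, x * (c * (μ {ω | y ω = k}).toReal)
        / (μ {ω | y ω = k}).toReal = c * x := by
      intro c x
      field_simp [hp k]
    rw [← Finset.add_sum_erase _ _ (Finset.mem_univ k), hnoise_diag k, hcancel]
    have hoff : ∀ l ∈ Finset.univ.erase k,
        (μ ({ω | yhat ω = l} ∩ {ω | y ω = k})).toReal
          * (μ ({ω | r ω = l} ∩ {ω | y ω = k})).toReal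
          / (μ {ω | y ω = k}).toReal
        = e / ((K : ℝ) - 1) * (μ ({ω | yhat ω = l} ∩ {ω | y ω = k})).toReal := by
      intro l hl
      rw [hnoise_off k l (Finset.ne_of_mem_erase hl), hcancel]
    rw [Finset.sum_congr rfl hoff, ← Finset.mul_sum,
      Finset.sum_erase_eq_sub (Finset.mem_univ k), hsl]
  rw [hRsum]
  have hsplit : ∀ k : Fin K, ∑ l : Fin K,
      ((μ ({ω | yhat ω = l} ∩ {ω | r ω = l} ∩ {ω | y ω = k})).toReal
        - (μ ({ω | yhat ω = l} ∩ {ω | y ω = k})).toReal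
            * (μ ({ω | r ω = l} ∩ {ω | y ω = k})).toReal
            / (μ {ω | y ω = k}).toReal)
      = (∑ l : Fin K,
          (μ ({ω | yhat ω = l} ∩ {ω | r ω = l} ∩ {ω | y ω = k})).toReal)
        - ((1 - e) * (μ ({ω | yhat ω = k} ∩ {ω | y ω = k})).toReal
            + e / ((K : ℝ) - 1)
              * ((μ {ω | y ω = k}).toReal
                  - (μ ({ω | yhat ω = k} ∩ {ω | y ω = k})).toReal)) := by
    intro k
    rw [Finset.sum_sub_distrib, hcol k]
  rw [Finset.sum_congr rfl (fun k _ => hsplit k), Finset.sum_sub_distrib]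
  rw [Finset.sum_add_distrib, ← Finset.mul_sum, ← Finset.mul_sum,
    Finset.sum_sub_distrib, hptot, ← hT]
  ring

/-- **error-reduction criterion of Proposition 1.** Under symmetric
label noise with `0 ≤ e < (K−1)/K` and positive class masses, for labelers
`ŷ₀, ŷ₁` against the same `y` and `r`, the measurement error strictly decreases,
`ε(ŷ₁) < ε(ŷ₀)`, iff the observed paired contrast exceeds the change in
co-labeling covariance: `A_R(ŷ₁) − A_R(ŷ₀) > J(ŷ₁) − J(ŷ₀)`. -/
theorem error_reduction_criterion
    {Ω : Type*} [MeasurableSpace Ω] {K : ℕ} (hK : 2 ≤ K)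
    (e : ℝ) (he0 : 0 ≤ e) (he1 : e < ((K : ℝ) - 1) / K)
    (μ : Measure Ω) [IsProbabilityMeasure μ]
    (y r : Ω → Fin K) (hy : Measurable y) (hr : Measurable r)
    (hnoise_diag : ∀ k : Fin K,
      (μ ({ω | r ω = k} ∩ {ω | y ω = k})).toReal
        = (1 - e) * (μ {ω | y ω = k}).toReal)
    (hnoise_off : ∀ k l : Fin K, l ≠ k →
      (μ ({ω | r ω = l} ∩ {ω | y ω = k})).toReal
        = e / ((K : ℝ) - 1) * (μ {ω | y ω = k}).toReal)
    (hpos : ∀ k : Fin K, 0 < μ {ω | y ω = k})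
    (yhat₀ yhat₁ : Ω → Fin K) (hyhat₀ : Measurable yhat₀) (hyhat₁ : Measurable yhat₁) :
    measError μ y yhat₁ < measError μ y yhat₀
      ↔ refAgree μ r yhat₁ - refAgree μ r yhat₀
          > coLabelCov μ y r yhat₁ - coLabelCov μ y r yhat₀ := by
  have h₀ := key_identity e μ y r hy hr hnoise_diag hnoise_off hpos yhat₀ hyhat₀
  have h₁ := key_identity e μ y r hy hr hnoise_diag hnoise_off hpos yhat₁ hyhat₁
  have hK1 : (1:ℝ) ≤ (K:ℝ) - 1 := by
    have h2 : (2:ℝ) ≤ (K:ℝ) := by exact_mod_cast hK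
    linarith
  have hKpos : (0:ℝ) < (K:ℝ) - 1 := by linarith
  have hc : e / ((K:ℝ) - 1) < 1 - e := by
    rw [div_lt_iff₀ hKpos]
    have hK0 : (0:ℝ) < (K:ℝ) := by linarith
    rw [lt_div_iff₀ hK0] at he1
    nlinarith
  simp only [measError, refAgree, coLabelCov, trueAgree, gt_iff_lt] at h₀ h₁ ⊢
  constructor
  · intro h
    nlinarith [h₀, h₁, hc, h]
  · intro h
    nlinarith [h₀, h₁, hc, h]
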